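/- Let F be a field of characteristic p, G a finite group, P a p-subgroup, and i a primitive idempotent of (FG)^P. Then the F[G × P]-module FGi, where G acts by left translation and P by right translation, is indecomposable. -/

import Mathlib

/-- An idempotent is primitive if it is nonzero and cannot be written as a sum of two
nonzero orthogonal idempotents. -/
def IsPrimitiveIdempotent {R : Type} [Ring R] (e : R) : Prop :=
  IsIdempotentElem e ∧ e ≠ 0 ∧
    ∀ a b : R, IsIdempotentElem a → IsIdempotentElem b → a * b = 0 → b * a = 0 →
      e = a + b → a = 0 ∨ b = 0

/-- The fixed-point subalgebra `(FG)^P` of the group algebra under conjugation by `P`. -/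
def FixedSub (F G : Type) [Field F] [Group G] (P : Subgroup G) :
    Subalgebra F (MonoidAlgebra F G) where
  carrier := {x | ∀ u ∈ P, MonoidAlgebra.of F G u * x = x * MonoidAlgebra.of F G u}
  mul_mem' := by
    intro a b ha hb u hu
    rw [← mul_assoc, ha u hu, mul_assoc, hb u hu, mul_assoc]
  add_mem' := by
    intro a b ha hb u hu
    rw [mul_add, add_mul, ha u hu, hb u hu]
  algebraMap_mem' := by
    intro r u hu
    exact (Algebra.commutes r (MonoidAlgebra.of F G u)).symm

/-- The representation of `G × P` on `FG` by left and right translations: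
`(g, u) • x = g x u⁻¹`. -/
noncomputable def bimodRep (F G : Type) [Field F] [Group G] (P : Subgroup G) :
    Representation F (G × P) (MonoidAlgebra F G) where
  toFun z := (LinearMap.mulLeft F (MonoidAlgebra.of F G z.1)).comp
      (LinearMap.mulRight F (MonoidAlgebra.of F G ((z.2 : G)⁻¹)))
  map_one' := by
    ext x
    simp
  map_mul' z w := by
    ext x
    simp [mul_assoc, mul_inv_rev]

/-- A module is indecomposable if it is nonzero and admits no nontrivial direct sum
decomposition. -/
def IsIndecomposableModule (R M : Type) [Ring R] [AddCommMonoid M] [Module R M] : Prop :=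
  (∃ x : M, x ≠ 0) ∧ ∀ N₁ N₂ : Submodule R M, IsCompl N₁ N₂ → N₁ = ⊥ ∨ N₂ = ⊥

namespace BimodAux

open MonoidAlgebra Representation

variable (F G : Type) [Field F] [Group G] (P : Subgroup G)

lemma of_smul (z : G × P) (x : (bimodRep F G P).asModule) :
    (bimodRep F G P).asModuleEquiv (of F (G × P) z • x) =
      of F G z.1 * ((bimodRep F G P).asModuleEquiv x * of F G ((z.2 : G)⁻¹)) := by
  rw [asModuleEquiv_map_smul, asAlgebraHom_of]
  rfl

lemma algebra_smul (r : F) (x : (bimodRep F G P).asModule) :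
    (bimodRep F G P).asModuleEquiv (algebraMap F (MonoidAlgebra F (G × P)) r • x) =
      r • (bimodRep F G P).asModuleEquiv x := by
  rw [asModuleEquiv_map_smul, AlgHom.commutes]
  rfl

noncomputable def lmul : MonoidAlgebra F G →ₐ[F] MonoidAlgebra F (G × P) :=
  mapDomainAlgHom F F (MonoidHom.inl G P)

lemma lmul_smul (c : MonoidAlgebra F G) (x : (bimodRep F G P).asModule) :
    (bimodRep F G P).asModuleEquiv (lmul F G P c • x) =
      c * (bimodRep F G P).asModuleEquiv x := by
  induction c using MonoidAlgebra.induction_on with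
  | of g =>
      have h1 : lmul F G P (of F G g) = of F (G × P) (g, (1 : P)) := by
        simp [lmul, MonoidAlgebra.of_apply]
      rw [h1, of_smul]
      show of F G g * (_ * of F G ((1 : G))⁻¹) = _
      rw [inv_one, map_one, mul_one]
  | add f g hf hg => rw [map_add, add_smul, map_add, hf, hg, add_mul]
  | smul r f hf =>
      have h2 : lmul F G P (r • f) = r • lmul F G P f :=
        map_smul (lmul F G P).toLinearMap r f
      rw [h2, Algebra.smul_def, mul_smul, algebra_smul, hf, smul_mul_assoc]

end BimodAux

set_option maxHeartbeats 2000000 in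
open MonoidAlgebra Representation BimodAux in
/-- If `i` is a primitive idempotent of `(FG)^P`, then the `F[G × P]`-module `FGi`
(with `G` acting by left translation and `P` by right translation) is indecomposable.
`FGi` is realised as the `F[G × P]`-submodule of `FG` generated by `i`. -/
theorem left_ideal_of_fixed_primitive_idempotent_indecomposable
    (p : ℕ) [Fact p.Prime] (F : Type) [Field F] [CharP F p]
    (G : Type) [Group G] [Fintype G] (P : Subgroup G) (hP : IsPGroup p P)
    (i : MonoidAlgebra F G) (hfix : ∀ u ∈ P, MonoidAlgebra.of F G u * i = i * MonoidAlgebra.of F G u)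
    (hprim : IsPrimitiveIdempotent (⟨i, hfix⟩ : FixedSub F G P)) :
    IsIndecomposableModule (MonoidAlgebra F (G × P))
      (Submodule.span (MonoidAlgebra F (G × P))
        {((bimodRep F G P).asModuleEquiv.symm i)} : Submodule _ (bimodRep F G P).asModule) := by
  classical
  set e := (bimodRep F G P).asModuleEquiv with he
  set i' : (bimodRep F G P).asModule := e.symm i with hi'def
  set M := Submodule.span (MonoidAlgebra F (G × P)) {i'} with hMdef
  have hii : e i' = i := e.apply_symm_apply i
  have hidem : i * i = i := congrArg Subtype.val hprim.1
  have hine : i ≠ 0 := fun h => hprim.2.1 (Subtype.ext h)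
  -- every element of M satisfies x * i = x
  have hmem : ∀ x ∈ M, e x * i = e x := by
    intro x hx
    induction hx using Submodule.span_induction with
    | mem y hy =>
        have hyi : y = i' := hy
        rw [hyi, hii, hidem]
    | zero => rw [map_zero, zero_mul]
    | add y z _ _ hy hz => rw [map_add, add_mul, hy, hz]
    | smul r y hymem hy =>
        induction r using MonoidAlgebra.induction_on with
        | of z =>
            rw [of_smul]
            have hui : of F G ((z.2 : G))⁻¹ * i = i * of F G ((z.2 : G))⁻¹ :=
              hfix _ (P.inv_mem z.2.2)
            rw [mul_assoc (of F G z.1), mul_assoc (e y), hui, ← mul_assoc (e y), hy]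
        | add f g hf hg => rw [add_smul, map_add, add_mul, hf, hg]
        | smul t f hf =>
            have h2 : (t • f) • y = algebraMap F (MonoidAlgebra F (G × P)) t • (f • y) := by
              rw [Algebra.smul_def, mul_smul]
            rw [h2, algebra_smul, smul_mul_assoc, hf]
  have hx0mem : i' ∈ M := Submodule.mem_span_singleton_self i'
  set x0 : M := ⟨i', hx0mem⟩ with hx0def
  constructor
  · refine ⟨x0, fun h => hine ?_⟩
    have h1 : i' = 0 := congrArg Subtype.val h
    rw [← hii, h1, map_zero]
  intro N₁ N₂ hcompl
  set prj : (↥M) →ₗ[MonoidAlgebra F (G × P)] ↥N₁ :=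
    @Submodule.projectionOnto (MonoidAlgebra F (G × P)) _ (↥M) _ _ N₁ N₂ hcompl with hprjdef
  set π : (↥M) →ₗ[MonoidAlgebra F (G × P)] (↥M) := N₁.subtype ∘ₗ prj with hπdef
  set A : M := π x0 with hAdef
  set a : MonoidAlgebra F G := e ↑A with hadef
  have hai : a * i = a := hmem _ A.2
  -- conjugation fixes x0 and hence A
  have hconj : ∀ (u : G) (hu : u ∈ P), of F (G × P) (u, ⟨u, hu⟩) • x0 = x0 := by
    intro u hu
    apply Subtype.ext
    rw [Submodule.coe_smul]
    apply e.injective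
    rw [of_smul]
    show of F G u * (e i' * of F G u⁻¹) = e i'
    rw [hii]
    have h1 : i * of F G u⁻¹ = of F G u⁻¹ * i := (hfix _ (P.inv_mem hu)).symm
    rw [h1, ← mul_assoc, ← map_mul, mul_inv_cancel, map_one, one_mul]
  have hAconj : ∀ (u : G) (hu : u ∈ P), of F (G × P) (u, ⟨u, hu⟩) • A = A := by
    intro u hu
    rw [hAdef, ← map_smul, hconj u hu]
  -- a commutes with P
  have haP : ∀ u ∈ P, of F G u * a = a * of F G u := by
    intro u hu
    have h1 : of F G u * (a * of F G u⁻¹) = a := by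
      have h2 := congrArg (fun y : M => e ↑y) (hAconj u hu)
      simp only [Submodule.coe_smul] at h2
      rw [of_smul] at h2
      exact h2
    calc of F G u * a
        = of F G u * (a * (of F G u⁻¹ * of F G u)) := by
          rw [← map_mul, inv_mul_cancel, map_one, mul_one]
      _ = (of F G u * (a * of F G u⁻¹)) * of F G u := by
          rw [mul_assoc, mul_assoc]
      _ = a * of F G u := by rw [h1]
  -- π fixes A
  have hπA : π A = A := by
    rw [hAdef]
    simp only [hπdef, hprjdef, LinearMap.comp_apply, Submodule.subtype_apply,
      Submodule.projectionOnto_apply_left]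
  -- left multiplication facts
  have hlmi : lmul F G P i • x0 = x0 := by
    apply Subtype.ext
    rw [Submodule.coe_smul]
    apply e.injective
    rw [lmul_smul, hii, hidem]
  have hlma : lmul F G P a • x0 = A := by
    apply Subtype.ext
    rw [Submodule.coe_smul]
    apply e.injective
    rw [lmul_smul, hii, hai]
  have hAa : A = lmul F G P a • A := by
    calc A = π A := hπA.symm
      _ = π (lmul F G P a • x0) := by rw [hlma]
      _ = lmul F G P a • π x0 := map_smul π _ _
      _ = lmul F G P a • A := by rw [← hAdef]
  have hAi : A = lmul F G P i • A := by
    calc A = π x0 := hAdef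
      _ = π (lmul F G P i • x0) := by rw [hlmi]
      _ = lmul F G P i • π x0 := map_smul π _ _
      _ = lmul F G P i • A := by rw [← hAdef]
  have haa : a * a = a := by
    have h2 := congrArg (fun y : M => e ↑y) hAa
    simp only [Submodule.coe_smul] at h2
    rw [lmul_smul] at h2
    exact h2.symm
  have hia : i * a = a := by
    have h2 := congrArg (fun y : M => e ↑y) hAi
    simp only [Submodule.coe_smul] at h2
    rw [lmul_smul] at h2
    exact h2.symm
  -- lift to the fixed subalgebra
  have haPmem : a ∈ FixedSub F G P := fun u hu => haP u hu
  have hbPmem : i - a ∈ FixedSub F G P := fun u hu => by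
    rw [mul_sub, sub_mul, hfix u hu, haP u hu]
  set aS : FixedSub F G P := ⟨a, haPmem⟩ with haSdef
  set bS : FixedSub F G P := ⟨i - a, hbPmem⟩ with hbSdef
  have hcoe : ∀ x y : FixedSub F G P,
      ((x * y : FixedSub F G P) : MonoidAlgebra F G) = (x : MonoidAlgebra F G) * y :=
    fun _ _ => rfl
  have hidemA : IsIdempotentElem aS := Subtype.ext (by rw [hcoe]; exact haa)
  have hidemB : IsIdempotentElem bS := Subtype.ext (by
    rw [hcoe]
    show (i - a) * (i - a) = i - a
    rw [mul_sub, sub_mul, sub_mul, hidem, hai, hia, haa]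
    abel)
  have horth1 : aS * bS = 0 := Subtype.ext (by
    rw [hcoe]
    show a * (i - a) = (0 : MonoidAlgebra F G)
    rw [mul_sub, hai, haa, sub_self])
  have horth2 : bS * aS = 0 := Subtype.ext (by
    rw [hcoe]
    show (i - a) * a = (0 : MonoidAlgebra F G)
    rw [sub_mul, hia, haa, sub_self])
  have hsum : (⟨i, hfix⟩ : FixedSub F G P) = aS + bS := Subtype.ext (by
    show i = a + (i - a)
    abel)
  rcases hprim.2.2 aS bS hidemA hidemB horth1 horth2 hsum with h | h
  · -- a = 0, so N₁ = ⊥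
    left
    have ha0 : a = 0 := congrArg Subtype.val h
    have hA0 : A = 0 := by
      apply Subtype.ext
      apply e.injective
      rw [ZeroMemClass.coe_zero, map_zero, ← hadef]
      exact ha0
    rw [eq_bot_iff]
    intro y hy
    obtain ⟨r, hr⟩ := Submodule.mem_span_singleton.mp y.2
    have hy0 : y = r • x0 := Subtype.ext (by rw [Submodule.coe_smul]; exact hr.symm)
    have h6 : prj y = (⟨y, hy⟩ : N₁) :=
      Submodule.projectionOnto_apply_left hcompl ⟨y, hy⟩
    have hπy : π y = y := congrArg N₁.subtype h6
    have hπy0 : π y = 0 := by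
      rw [hy0, map_smul, ← hAdef, hA0, smul_zero]
    rw [Submodule.mem_bot, ← hπy, hπy0]
  · -- i - a = 0, so N₂ = ⊥
    right
    have hab : a = i := by
      have : i - a = 0 := congrArg Subtype.val h
      rw [sub_eq_zero] at this
      exact this.symm
    have hAx0 : A = x0 := by
      apply Subtype.ext
      apply e.injective
      have hx0c : (x0 : (bimodRep F G P).asModule) = i' := by rw [hx0def]
      rw [← hadef, hab, hx0c, hii]
    have hπx0 : π x0 = x0 := by rw [← hAdef, hAx0]
    rw [eq_bot_iff]
    intro y hy
    obtain ⟨r, hr⟩ := Submodule.mem_span_singleton.mp y.2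
    have hy0 : y = r • x0 := Subtype.ext (by rw [Submodule.coe_smul]; exact hr.symm)
    have hπy : π y = y := by rw [hy0, map_smul, hπx0]
    have h6 : prj y = 0 := Submodule.projectionOnto_apply_of_mem_right hcompl hy
    have hπy0 : π y = 0 := (congrArg N₁.subtype h6).trans (map_zero _)
    rw [Submodule.mem_bot, ← hπy, hπy0]
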